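/- arXiv:2309.14906 — 2 statements merged into one kernel-verified Lean document; each statement's English description precedes it below -/
import Mathlib

section
/- Let q > 0, s, r ∈ ℝ with s² − q r > 0. If (s − √(s² − qr))/q < k₁ < k₂ < (s + √(s² − qr))/q, then there exists λ > 0 such that the matrix [[q, s],[s, r]] − λ·[[1, (k₁+k₂)/2],[(k₁+k₂)/2, k₁k₂]] is negative definite. -/
open Matrix

def NegDef (M : Matrix (Fin 2) (Fin 2) ℝ) : Prop :=
  ∀ v : Fin 2 → ℝ, v ≠ 0 → v ⬝ᵥ M.mulVec v < 0

noncomputable def sectorMat (k1 k2 : ℝ) : Matrix (Fin 2) (Fin 2) ℝ :=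
  !![1, (k1 + k2) / 2; (k1 + k2) / 2, k1 * k2]

lemma quad_neg (a b c x y : ℝ) (ha : a < 0) (hdet : 0 < a * c - b ^ 2)
    (hxy : x ≠ 0 ∨ y ≠ 0) : a * x ^ 2 + 2 * b * (x * y) + c * y ^ 2 < 0 := by
  rcases eq_or_ne y 0 with hy | hy
  · subst hy
    have hx : x ≠ 0 := hxy.resolve_right (by simp)
    have : 0 < x ^ 2 := by positivity
    nlinarith
  · have hy2 : 0 < y ^ 2 := by positivity
    nlinarith [sq_nonneg (a * x + b * y), mul_pos hdet hy2, mul_neg_of_pos_of_neg hy2 ha]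

theorem stmt_1 (q s r k1 k2 : ℝ) (hq : 0 < q) (hd : 0 < s ^ 2 - q * r)
    (h1 : (s - Real.sqrt (s ^ 2 - q * r)) / q < k1) (h12 : k1 < k2)
    (h2 : k2 < (s + Real.sqrt (s ^ 2 - q * r)) / q) :
    ∃ lam : ℝ, 0 < lam ∧ NegDef (!![q, s; s, r] - lam • sectorMat k1 k2) := by
  set d := Real.sqrt (s ^ 2 - q * r) with hdd
  have hD : d ^ 2 = s ^ 2 - q * r := Real.sq_sqrt hd.le
  have hd0 : 0 < d := Real.sqrt_pos.mpr hd
  have h1' : s - d < q * k1 := by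
    have := (div_lt_iff₀ hq).mp h1; linarith
  have h2' : q * k2 < s + d := by
    have := (lt_div_iff₀ hq).mp h2; linarith
  have hP1 : 0 < 2 * s * k1 - q * k1 ^ 2 - r := by
    have hp : 0 < (q * k1 - (s - d)) * ((s + d) - q * k1) := by
      have : q * k1 < s + d := lt_trans (by nlinarith) h2'
      nlinarith
    nlinarith
  have hP2 : 0 < 2 * s * k2 - q * k2 ^ 2 - r := by
    have hp : 0 < (q * k2 - (s - d)) * ((s + d) - q * k2) := by
      have : s - d < q * k2 := lt_trans h1' (by nlinarith)
      nlinarith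
    nlinarith
  have he : 0 < (k2 - k1) ^ 2 := pow_pos (sub_pos.2 h12) 2
  set P : ℝ := (2 * s * k1 - q * k1 ^ 2 - r) + (2 * s * k2 - q * k2 ^ 2 - r) with hP
  have hPpos : 0 < P := by rw [hP]; linarith
  set lam : ℝ := q + P / (k2 - k1) ^ 2 with hlam
  have hlampos : 0 < lam := by positivity
  refine ⟨lam, hlampos, ?_⟩
  intro v hv
  set a : ℝ := q - lam with ha
  set b : ℝ := s - lam * ((k1 + k2) / 2) with hb
  set c : ℝ := r - lam * (k1 * k2) with hc
  have haneg : a < 0 := by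
    have : 0 < P / (k2 - k1) ^ 2 := by positivity
    simp only [ha, hlam]; linarith
  have hdet : 0 < a * c - b ^ 2 := by
    have key : a * c - b ^ 2 =
        (2 * s * k1 - q * k1 ^ 2 - r) * (2 * s * k2 - q * k2 ^ 2 - r) / (k2 - k1) ^ 2 := by
      simp only [ha, hb, hc, hlam, hP]
      have hk : k2 - k1 ≠ 0 := sub_ne_zero.2 h12.ne'
      field_simp
      ring
    rw [key]
    positivity
  have hQF : v ⬝ᵥ (!![q, s; s, r] - lam • sectorMat k1 k2).mulVec v =
      a * v 0 ^ 2 + 2 * b * (v 0 * v 1) + c * v 1 ^ 2 := by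
    simp [sectorMat, Matrix.sub_apply, Matrix.smul_apply, dotProduct, mulVec,
      Fin.sum_univ_two, ha, hb, hc]
    ring
  rw [hQF]
  have hxy : v 0 ≠ 0 ∨ v 1 ≠ 0 := by
    by_contra h
    push_neg at h
    exact hv (by ext i; fin_cases i <;> simp [h.1, h.2])
  exact quad_neg a b c (v 0) (v 1) haneg hdet hxy
end

section
/- Let q = 0, r < 0, s > 0 (output-strictly passive plant case). If r/(2s) < k₁ < k₂, then there exists λ > 0 such that the matrix [[0, s],[s, r]] − λ·[[1, (k₁+k₂)/2],[(k₁+k₂)/2, k₁k₂]] is negative definite. -/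
open Matrix

theorem stmt_3 (s r k1 k2 : ℝ) (hs : 0 < s) (hr : r < 0)
    (h1 : r / (2 * s) < k1) (h12 : k1 < k2) :
    ∃ lam : ℝ, 0 < lam ∧ NegDef (!![0, s; s, r] - lam • sectorMat k1 k2) := by
  have hr1 : r < k1 * (2 * s) := (div_lt_iff₀ (by positivity)).mp h1
  have hb : s * (k2 - k1) < s * (k1 + k2) - r := by nlinarith
  have hbpos : 0 < s * (k1 + k2) - r := lt_trans (by nlinarith) hb
  have hd : 0 < (k2 - k1) ^ 2 := by nlinarith
  set lam : ℝ := 2 * (s * (k1 + k2) - r) / (k2 - k1) ^ 2 with hlam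
  have hlampos : 0 < lam := div_pos (by linarith) hd
  refine ⟨lam, hlampos, ?_⟩
  intro v hv
  have hA : -lam < 0 := by linarith
  -- determinant condition
  have hdet : 0 < (-lam) * (r - lam * (k1 * k2)) - (s - lam * ((k1 + k2) / 2)) ^ 2 := by
    have key : (-lam) * (r - lam * (k1 * k2)) - (s - lam * ((k1 + k2) / 2)) ^ 2 =
        ((s * (k1 + k2) - r) ^ 2 - s ^ 2 * (k2 - k1) ^ 2) / (k2 - k1) ^ 2 := by
      rw [hlam]; field_simp [sub_ne_zero.mpr h12.ne']; ring
    rw [key]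
    apply div_pos _ hd
    have hsd : 0 < s * (k2 - k1) := by nlinarith
    nlinarith
  have hv01 : v 0 ≠ 0 ∨ v 1 ≠ 0 := by
    by_contra h
    push_neg at h
    apply hv
    funext i
    fin_cases i <;> simp [h.1, h.2]
  have hexp : v ⬝ᵥ (!![0, s; s, r] - lam • sectorMat k1 k2).mulVec v =
      (-lam) * v 0 ^ 2 + 2 * (s - lam * ((k1 + k2) / 2)) * v 0 * v 1 +
        (r - lam * (k1 * k2)) * v 1 ^ 2 := by
    simp [sectorMat, dotProduct, mulVec, Fin.sum_univ_two]
    ring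
  rw [hexp]
  rcases eq_or_ne (v 1) 0 with h1' | h1'
  · have h0 : v 0 ≠ 0 := by tauto
    rw [h1']
    have : 0 < v 0 ^ 2 := by positivity
    nlinarith
  · have h1sq : 0 < v 1 ^ 2 := by positivity
    nlinarith [sq_nonneg ((-lam) * v 0 + (s - lam * ((k1 + k2) / 2)) * v 1),
      mul_pos hdet h1sq]
end
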